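/- arXiv:2003.13587 — 3 statements merged into one kernel-verified Lean document; each statement's English description precedes it below -/
import Mathlib

section
/- Let F : [0,∞) → ℝ be such that t ↦ F(√t) is strictly concave on (0,∞) (this holds when F(t)=∫₀ᵗ f with f(s)/s strictly decreasing on (0,∞)). Then for any measurable nonnegative functions a, b on Ω with a² ≠ b² on a set of positive measure, the map t ↦ ∫_Ω F(√((1-t)a² + t b²)) is strictly concave on [0,1]. -/
open MeasureTheory Filter Topology

lemma aux_concave_zero {G : ℝ → ℝ} (hc : ContinuousOn G (Set.Ici 0))
    (hs : StrictConcaveOn ℝ (Set.Ioi (0:ℝ)) G)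
    {y α β : ℝ} (hy : 0 < y) (hα : 0 < α) (hβ : 0 < β) (hαβ : α + β = 1) :
    α * G 0 + β * G y ≤ G (β * y) := by
  have hG0 : Filter.Tendsto G (𝓝[>] (0:ℝ)) (𝓝 (G 0)) :=
    ((hc 0 Set.self_mem_Ici).tendsto).mono_left (nhdsWithin_mono _ Set.Ioi_subset_Ici_self)
  have h1 : Filter.Tendsto (fun ε => α * G ε + β * G y) (𝓝[>] (0:ℝ))
      (𝓝 (α * G 0 + β * G y)) := (hG0.const_mul α).add_const (β * G y)
  have hinner : Filter.Tendsto (fun ε => α * ε + β * y) (𝓝[>] (0:ℝ)) (𝓝[Set.Ici 0] (β * y)) := by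
    apply tendsto_nhdsWithin_of_tendsto_nhds_of_eventually_within
    · have : Filter.Tendsto (fun ε : ℝ => α * ε + β * y) (𝓝 0) (𝓝 (α * 0 + β * y)) :=
        (tendsto_id.const_mul α).add_const (β * y)
      simpa using this.mono_left nhdsWithin_le_nhds
    · filter_upwards [self_mem_nhdsWithin] with ε (hε : 0 < ε)
      exact Set.mem_Ici.mpr (by positivity)
  have h2 : Filter.Tendsto (fun ε => G (α * ε + β * y)) (𝓝[>] (0:ℝ)) (𝓝 (G (β * y))) :=
    ((hc (β * y) (Set.mem_Ici.mpr (by positivity))).tendsto).comp hinner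
  refine le_of_tendsto_of_tendsto h1 h2 ?_
  filter_upwards [self_mem_nhdsWithin] with ε (hε : 0 < ε)
  have := hs.concaveOn.2 (Set.mem_Ioi.mpr hε) (Set.mem_Ioi.mpr hy) hα.le hβ.le hαβ
  simpa [smul_eq_mul] using this

lemma aux_concave {G : ℝ → ℝ} (hc : ContinuousOn G (Set.Ici 0))
    (hs : StrictConcaveOn ℝ (Set.Ioi (0:ℝ)) G) :
    ConcaveOn ℝ (Set.Ici 0) G := by
  refine ⟨convex_Ici 0, ?_⟩
  intro x hx y hy α β hα hβ hαβ
  simp only [smul_eq_mul]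
  rcases hα.eq_or_lt with h|hα'
  · have hβ1 : β = 1 := by linarith
    simp [← h, hβ1]
  rcases hβ.eq_or_lt with h|hβ'
  · have hα1 : α = 1 := by linarith
    simp [← h, hα1]
  rcases (Set.mem_Ici.mp hx).eq_or_lt with hx0|hx'
  · rcases (Set.mem_Ici.mp hy).eq_or_lt with hy0|hy'
    · rw [← hx0, ← hy0]
      have : α * G 0 + β * G 0 = G 0 := by rw [← add_mul, hαβ, one_mul]
      simp [this]
    · have := aux_concave_zero hc hs hy' hα' hβ' hαβ
      rw [← hx0]; simpa using this
  · rcases (Set.mem_Ici.mp hy).eq_or_lt with hy0|hy'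
    · have := aux_concave_zero hc hs hx' hβ' hα' (by linarith)
      rw [← hy0]
      calc α * G x + β * G 0 = β * G 0 + α * G x := by ring
        _ ≤ G (α * x) := this
        _ = G (α * x + β * 0) := by rw [mul_zero, add_zero]
    · have := hs.concaveOn.2 (Set.mem_Ioi.mpr hx') (Set.mem_Ioi.mpr hy') hα hβ hαβ
      simpa [smul_eq_mul] using this

lemma aux_strict_zero {G : ℝ → ℝ} (hc : ContinuousOn G (Set.Ici 0))
    (hs : StrictConcaveOn ℝ (Set.Ioi (0:ℝ)) G)
    {y α β : ℝ} (hy : 0 < y) (hα : 0 < α) (hβ : 0 < β) (hαβ : α + β = 1) :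
    α * G 0 + β * G y < G (β * y) := by
  have hβ1 : β < 1 := by linarith
  have h2β : (0:ℝ) < 2 - β := by linarith
  have hεpos : 0 < β * y / 2 := by positivity
  have hεy : β * y / 2 ≠ y := ne_of_lt (by nlinarith)
  have hγpos : 0 < 2 * (1 - β) / (2 - β) := by
    apply div_pos <;> linarith
  have hγ1 : 2 * (1 - β) / (2 - β) < 1 := by
    rw [div_lt_one h2β]; linarith
  -- strict concavity step
  have hcval : (2 - β) * (2 * (1 - β) / (2 - β)) = 2 * (1 - β) := by
    field_simp
  have hcomb : 2 * (1 - β) / (2 - β) * (β * y / 2) + (1 - 2 * (1 - β) / (2 - β)) * y = β * y := by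
    apply mul_right_cancel₀ h2β.ne'
    rw [show (2 * (1 - β) / (2 - β) * (β * y / 2) + (1 - 2 * (1 - β) / (2 - β)) * y) * (2 - β)
        = ((2 - β) * (2 * (1 - β) / (2 - β))) * (β * y / 2)
          + ((2 - β) - (2 - β) * (2 * (1 - β) / (2 - β))) * y by ring, hcval]
    ring
  have h1 : 2 * (1 - β) / (2 - β) * G (β * y / 2) + (1 - 2 * (1 - β) / (2 - β)) * G y
      < G (β * y) := by
    have := hs.2 (Set.mem_Ioi.mpr hεpos) (Set.mem_Ioi.mpr hy) hεy hγpos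
      (show (0:ℝ) < 1 - 2 * (1 - β) / (2 - β) by linarith) (by ring)
    rw [smul_eq_mul, smul_eq_mul, smul_eq_mul, smul_eq_mul, hcomb] at this
    exact this
  -- concavity step
  have hcomb2 : (2 - β) / 2 * 0 + (1 - (2 - β) / 2) * y = β * y / 2 := by ring
  have h2 : (2 - β) / 2 * G 0 + (1 - (2 - β) / 2) * G y ≤ G (β * y / 2) := by
    have := (aux_concave hc hs).2 Set.self_mem_Ici (Set.mem_Ici.mpr hy.le)
      (show (0:ℝ) ≤ (2 - β) / 2 by linarith) (show (0:ℝ) ≤ 1 - (2 - β) / 2 by linarith) (by ring)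
    rw [smul_eq_mul, smul_eq_mul, smul_eq_mul, smul_eq_mul, hcomb2] at this
    exact this
  -- clear denominators
  have h1' : 2 * (1 - β) * G (β * y / 2) + β * G y < (2 - β) * G (β * y) := by
    have h := mul_lt_mul_of_pos_left h1 h2β
    rw [show (2 - β) * (2 * (1 - β) / (2 - β) * G (β * y / 2)
        + (1 - 2 * (1 - β) / (2 - β)) * G y)
        = ((2 - β) * (2 * (1 - β) / (2 - β))) * G (β * y / 2)
          + ((2 - β) - (2 - β) * (2 * (1 - β) / (2 - β))) * G y by ring, hcval] at h
    have e : (2 - β) - 2 * (1 - β) = β := by ring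
    rw [e] at h
    exact h
  have h2' : (2 - β) * G 0 + β * G y ≤ 2 * G (β * y / 2) := by
    have := mul_le_mul_of_nonneg_left h2 (by norm_num : (0:ℝ) ≤ 2)
    calc (2 - β) * G 0 + β * G y
        = 2 * ((2 - β) / 2 * G 0 + (1 - (2 - β) / 2) * G y) := by ring
      _ ≤ 2 * G (β * y / 2) := this
  have h2'' := mul_le_mul_of_nonneg_left h2' (show (0:ℝ) ≤ 1 - β by linarith)
  have hα' : α = 1 - β := by linarith
  subst hα'
  have final : (2 - β) * ((1 - β) * G 0 + β * G y) < (2 - β) * G (β * y) := by nlinarith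
  exact (mul_lt_mul_iff_right₀ h2β).mp final

lemma aux_strict {G : ℝ → ℝ} (hc : ContinuousOn G (Set.Ici 0))
    (hs : StrictConcaveOn ℝ (Set.Ioi (0:ℝ)) G)
    {x y α β : ℝ} (hx : 0 ≤ x) (hy : 0 ≤ y) (hxy : x ≠ y)
    (hα : 0 < α) (hβ : 0 < β) (hαβ : α + β = 1) :
    α * G x + β * G y < G (α * x + β * y) := by
  rcases hx.eq_or_lt with hx0|hx'
  · have hne : (0:ℝ) ≠ y := by rw [hx0]; exact hxy
    have hy' : 0 < y := lt_of_le_of_ne hy hne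
    have := aux_strict_zero hc hs hy' hα hβ hαβ
    rw [← hx0]; simpa using this
  · rcases hy.eq_or_lt with hy0|hy'
    · have := aux_strict_zero hc hs hx' hβ hα (by linarith)
      rw [← hy0]
      calc α * G x + β * G 0 = β * G 0 + α * G x := by ring
        _ < G (α * x) := this
        _ = G (α * x + β * 0) := by rw [mul_zero, add_zero]
    · have := hs.2 (Set.mem_Ioi.mpr hx') (Set.mem_Ioi.mpr hy') hxy hα hβ hαβ
      simpa [smul_eq_mul] using this


theorem integral_strictly_concave_along_squares
    {X : Type*} [MeasurableSpace X] (μ : Measure X) [IsFiniteMeasure μ]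
    (a b : X → ℝ) (ha : Measurable a) (hb : Measurable b)
    (hapos : ∀ x, 0 ≤ a x) (hbpos : ∀ x, 0 ≤ b x)
    (habdd : ∃ M : ℝ, ∀ x, a x ≤ M ∧ b x ≤ M)
    (F : ℝ → ℝ) (hFcont : ContinuousOn F (Set.Ici (0:ℝ)))
    (hFconc : StrictConcaveOn ℝ (Set.Ioi (0:ℝ)) (fun t => F (Real.sqrt t)))
    (hdiff : 0 < μ {x | (a x)^2 ≠ (b x)^2})
    (hint : ∀ t ∈ Set.Icc (0:ℝ) 1,
      Integrable (fun x => F (Real.sqrt ((1 - t) * (a x)^2 + t * (b x)^2))) μ) :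
    StrictConcaveOn ℝ (Set.Icc (0:ℝ) 1)
      (fun t => ∫ x, F (Real.sqrt ((1 - t) * (a x)^2 + t * (b x)^2)) ∂μ) := by
  have hGc : ContinuousOn (fun s => F (Real.sqrt s)) (Set.Ici 0) := by
    apply hFcont.comp Real.continuous_sqrt.continuousOn
    intro s _
    exact Set.mem_Ici.mpr (Real.sqrt_nonneg s)
  refine ⟨convex_Icc 0 1, ?_⟩
  intro p hp q hq hpq α β hα hβ hαβ
  simp only [smul_eq_mul]
  set r := α * p + β * q with hr
  have hrmem : r ∈ Set.Icc (0:ℝ) 1 := (convex_Icc 0 1) hp hq hα.le hβ.le hαβ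
  have hnn : ∀ t ∈ Set.Icc (0:ℝ) 1, ∀ x, 0 ≤ (1 - t) * (a x)^2 + t * (b x)^2 := by
    intro t ht x
    have h1 : 0 ≤ 1 - t := by linarith [ht.2]
    have h2 : 0 ≤ t := ht.1
    positivity
  have hcombid : ∀ x, (1 - r) * (a x)^2 + r * (b x)^2
      = α * ((1 - p) * (a x)^2 + p * (b x)^2) + β * ((1 - q) * (a x)^2 + q * (b x)^2) := by
    intro x
    have hβeq : β = 1 - α := by linarith
    rw [hr, hβeq]; ring
  -- pointwise inequalities
  have key : ∀ x, α * F (Real.sqrt ((1 - p) * (a x)^2 + p * (b x)^2))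
      + β * F (Real.sqrt ((1 - q) * (a x)^2 + q * (b x)^2))
      ≤ F (Real.sqrt ((1 - r) * (a x)^2 + r * (b x)^2)) := by
    intro x
    have := (aux_concave hGc hFconc).2 (Set.mem_Ici.mpr (hnn p hp x))
      (Set.mem_Ici.mpr (hnn q hq x)) hα.le hβ.le hαβ
    simp only [smul_eq_mul] at this
    rw [hcombid x]
    exact this
  have keystrict : ∀ x, (a x)^2 ≠ (b x)^2 →
      α * F (Real.sqrt ((1 - p) * (a x)^2 + p * (b x)^2))
      + β * F (Real.sqrt ((1 - q) * (a x)^2 + q * (b x)^2))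
      < F (Real.sqrt ((1 - r) * (a x)^2 + r * (b x)^2)) := by
    intro x hx
    have hne : (1 - p) * (a x)^2 + p * (b x)^2 ≠ (1 - q) * (a x)^2 + q * (b x)^2 := by
      intro h
      have h' : (q - p) * ((a x)^2 - (b x)^2) = 0 := by linarith [h]
      rcases mul_eq_zero.mp h' with h''|h''
      · exact hpq (by linarith)
      · exact hx (by linarith)
    have := aux_strict hGc hFconc (hnn p hp x) (hnn q hq x) hne hα hβ hαβ
    rw [hcombid x]
    exact this
  -- integrability
  have I1 := hint p hp
  have I2 := hint q hq
  have I3 := hint r hrmem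
  set f1 : X → ℝ := fun x => F (Real.sqrt ((1 - p) * (a x)^2 + p * (b x)^2)) with hf1
  set f2 : X → ℝ := fun x => F (Real.sqrt ((1 - q) * (a x)^2 + q * (b x)^2)) with hf2
  set f3 : X → ℝ := fun x => F (Real.sqrt ((1 - r) * (a x)^2 + r * (b x)^2)) with hf3
  set d : X → ℝ := fun x => f3 x - (α * f1 x + β * f2 x) with hd
  have hd_int : Integrable d μ := I3.sub ((I1.const_mul α).add (I2.const_mul β))
  have hd_nonneg : ∀ x, 0 ≤ d x := by
    intro x
    have := key x
    simp only [hd, hf1, hf2, hf3]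
    linarith
  have hsub : {x | (a x)^2 ≠ (b x)^2} ⊆ Function.support d := by
    intro x hx
    have := keystrict x hx
    simp only [Function.mem_support, hd, hf1, hf2, hf3]
    intro h
    linarith
  have hpos : 0 < ∫ x, d x ∂μ :=
    (integral_pos_iff_support_of_nonneg hd_nonneg hd_int).2
      (lt_of_lt_of_le hdiff (measure_mono hsub))
  have Ig : Integrable (fun x => α * f1 x + β * f2 x) μ := (I1.const_mul α).add (I2.const_mul β)
  have heq : ∫ x, d x ∂μ = (∫ x, f3 x ∂μ) - (α * ∫ x, f1 x ∂μ + β * ∫ x, f2 x ∂μ) := by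
    calc ∫ x, d x ∂μ = ∫ x, (f3 x - (α * f1 x + β * f2 x)) ∂μ := rfl
      _ = (∫ x, f3 x ∂μ) - ∫ x, (α * f1 x + β * f2 x) ∂μ := integral_sub I3 Ig
      _ = (∫ x, f3 x ∂μ) - (α * ∫ x, f1 x ∂μ + β * ∫ x, f2 x ∂μ) := by
          rw [integral_add (I1.const_mul α) (I2.const_mul β),
            integral_const_mul, integral_const_mul]
  rw [heq] at hpos
  linarith
end

section
/- Let Ω = (0,π)² and φ_α(x,y) = cos(α)·sin(x)·sin(2y) + sin(α)·sin(2x)·sin(y). Then ∫_Ω φ_α⁴ dx dy = (3π²/256)·(13 - cos(4α)). -/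
open Real

namespace SquareL4Aux

open intervalIntegral

lemma hasDerivAt_sin_mul (k y : ℝ) :
    HasDerivAt (fun t : ℝ => sin (k*t)) (k * cos (k*y)) y := by
  simpa [mul_comm, Function.comp_def] using (Real.hasDerivAt_sin (k*y)).comp y ((hasDerivAt_id y).const_mul k)

lemma sin_sq_half (t : ℝ) : sin t ^ 2 = (1 - cos (2*t))/2 := by
  have h1 := cos_two_mul' t
  have h2 := sin_sq_add_cos_sq t
  linarith

lemma sinpi2 : sin (2*π) = 0 := sin_two_pi
lemma sinpi4 : sin (4*π) = 0 := by
  rw [show (4:ℝ)*π = 2*π + 2*π by ring, sin_add, sinpi2, cos_two_pi]; ring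
lemma sinpi8 : sin (8*π) = 0 := by
  rw [show (8:ℝ)*π = 4*π + 4*π by ring, sin_add, sinpi4]; ring

lemma I5 : ∫ y in (0:ℝ)..π, sin y ^ 4 = 3*π/8 := by
  have key : ∀ y ∈ Set.uIcc (0:ℝ) π,
      HasDerivAt (fun t : ℝ => 3/8*t - 1/4*sin (2*t) + 1/32*sin (4*t)) (sin y ^ 4) y := by
    intro y _
    have h : HasDerivAt (fun t : ℝ => 3/8*t - 1/4*sin (2*t) + 1/32*sin (4*t))
        (3/8*1 - 1/4*(2*cos (2*y)) + 1/32*(4*cos (4*y))) y :=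
      (((hasDerivAt_id y).const_mul (3/8:ℝ)).sub ((hasDerivAt_sin_mul 2 y).const_mul (1/4:ℝ))).add
        ((hasDerivAt_sin_mul 4 y).const_mul (1/32:ℝ))
    convert h using 1
    rw [show (4:ℝ)*y = 2*(2*y) by ring, cos_two_mul' (2*y)]
    linear_combination (sin y^2 + (1 - cos (2*y))/2) * sin_sq_half y
      + (1/8) * sin_sq_add_cos_sq (2*y)
  rw [integral_eq_sub_of_hasDerivAt key
      ((by fun_prop : Continuous fun y : ℝ => sin y ^ 4).intervalIntegrable 0 π)]
  simp [sinpi2, sinpi4]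
  ring

lemma I1 : ∫ y in (0:ℝ)..π, sin (2*y) ^ 4 = 3*π/8 := by
  have key : ∀ y ∈ Set.uIcc (0:ℝ) π,
      HasDerivAt (fun t : ℝ => 3/8*t - 1/8*sin (4*t) + 1/64*sin (8*t)) (sin (2*y) ^ 4) y := by
    intro y _
    have h : HasDerivAt (fun t : ℝ => 3/8*t - 1/8*sin (4*t) + 1/64*sin (8*t))
        (3/8*1 - 1/8*(4*cos (4*y)) + 1/64*(8*cos (8*y))) y :=
      (((hasDerivAt_id y).const_mul (3/8:ℝ)).sub ((hasDerivAt_sin_mul 4 y).const_mul (1/8:ℝ))).add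
        ((hasDerivAt_sin_mul 8 y).const_mul (1/64:ℝ))
    convert h using 1
    rw [show (8:ℝ)*y = 2*(2*(2*y)) by ring, show (4:ℝ)*y = 2*(2*y) by ring,
      cos_two_mul' (2*(2*y))]
    linear_combination (sin (2*y)^2 + (1 - cos (2*(2*y)))/2) * sin_sq_half (2*y)
      + (1/8) * sin_sq_add_cos_sq (2*(2*y))
  rw [integral_eq_sub_of_hasDerivAt key
      ((by fun_prop : Continuous fun y : ℝ => sin (2*y) ^ 4).intervalIntegrable 0 π)]
  simp [sinpi4, sinpi8]
  ring

lemma I3 : ∫ y in (0:ℝ)..π, sin (2*y) ^ 2 * sin y ^ 2 = π/4 := by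
  have key : ∀ y ∈ Set.uIcc (0:ℝ) π,
      HasDerivAt (fun t : ℝ => 1/4*t - 1/16*sin (4*t) - 1/12*(sin (2*t))^3)
        (sin (2*y) ^ 2 * sin y ^ 2) y := by
    intro y _
    have hcube : HasDerivAt (fun t : ℝ => (sin (2*t))^3)
        (3 * (sin (2*y))^2 * (2 * cos (2*y))) y := by
      simpa [Pi.pow_def] using (hasDerivAt_sin_mul 2 y).pow 3
    have h : HasDerivAt (fun t : ℝ => 1/4*t - 1/16*sin (4*t) - 1/12*(sin (2*t))^3)
        (1/4*1 - 1/16*(4*cos (4*y)) - 1/12*(3 * (sin (2*y))^2 * (2 * cos (2*y)))) y :=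
      (((hasDerivAt_id y).const_mul (1/4:ℝ)).sub ((hasDerivAt_sin_mul 4 y).const_mul (1/16:ℝ))).sub
        (hcube.const_mul (1/12:ℝ))
    convert h using 1
    rw [show (4:ℝ)*y = 2*(2*y) by ring, cos_two_mul' (2*y)]
    linear_combination (sin (2*y)^2) * sin_sq_half y + (1/4) * sin_sq_add_cos_sq (2*y)
  rw [integral_eq_sub_of_hasDerivAt key
      ((by fun_prop : Continuous fun y : ℝ => sin (2*y) ^ 2 * sin y ^ 2).intervalIntegrable 0 π)]
  simp [sinpi2, sinpi4]
  ring

lemma I2 : ∫ y in (0:ℝ)..π, sin (2*y) ^ 3 * sin y = 0 := by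
  have key : ∀ y : ℝ, sin (2*(π - y))^3 * sin (π - y) = -(sin (2*y)^3 * sin y) := by
    intro y
    have h1 : sin (2*(π - y)) = -sin (2*y) := by
      rw [show 2*(π - y) = 2*π - 2*y by ring, sin_sub, sin_two_pi, cos_two_pi]; ring
    rw [h1, sin_pi_sub]; ring
  have h := intervalIntegral.integral_comp_sub_left (a := (0:ℝ)) (b := π)
      (fun y => sin (2*y)^3 * sin y) π
  simp only [sub_self, sub_zero] at h
  have h2 : (∫ x in (0:ℝ)..π, sin (2*(π - x))^3 * sin (π - x))
      = ∫ x in (0:ℝ)..π, -(sin (2*x)^3 * sin x) :=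
    intervalIntegral.integral_congr (fun x _ => key x)
  rw [h2, intervalIntegral.integral_neg] at h
  linarith

lemma I4 : ∫ y in (0:ℝ)..π, sin (2*y) * sin y ^ 3 = 0 := by
  have key : ∀ y : ℝ, sin (2*(π - y)) * sin (π - y)^3 = -(sin (2*y) * sin y^3) := by
    intro y
    have h1 : sin (2*(π - y)) = -sin (2*y) := by
      rw [show 2*(π - y) = 2*π - 2*y by ring, sin_sub, sin_two_pi, cos_two_pi]; ring
    rw [h1, sin_pi_sub]; ring
  have h := intervalIntegral.integral_comp_sub_left (a := (0:ℝ)) (b := π)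
      (fun y => sin (2*y) * sin y^3) π
  simp only [sub_self, sub_zero] at h
  have h2 : (∫ x in (0:ℝ)..π, sin (2*(π - x)) * sin (π - x)^3)
      = ∫ x in (0:ℝ)..π, -(sin (2*x) * sin x^3) :=
    intervalIntegral.integral_congr (fun x _ => key x)
  rw [h2, intervalIntegral.integral_neg] at h
  linarith

lemma inner_int (a b : ℝ) :
    ∫ y in (0:ℝ)..π, (a * sin (2*y) + b * sin y)^4
      = 3*π/8*a^4 + 3*π/2*a^2*b^2 + 3*π/8*b^4 := by
  have hexp : Set.EqOn (fun y : ℝ => (a * sin (2*y) + b * sin y)^4)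
      (fun y : ℝ => a^4 * sin (2*y)^4 + 4*a^3*b*(sin (2*y)^3*sin y)
        + 6*a^2*b^2*(sin (2*y)^2*sin y^2) + 4*a*b^3*(sin (2*y)*sin y^3) + b^4 * sin y^4)
      (Set.uIcc 0 π) := fun y _ => by ring
  rw [intervalIntegral.integral_congr hexp]
  have c1 : IntervalIntegrable (fun y : ℝ => a^4 * sin (2*y)^4) MeasureTheory.volume 0 π :=
    (by fun_prop : Continuous fun y : ℝ => a^4 * sin (2*y)^4).intervalIntegrable 0 π
  have c2 : IntervalIntegrable (fun y : ℝ => 4*a^3*b*(sin (2*y)^3*sin y))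
      MeasureTheory.volume 0 π :=
    (by fun_prop : Continuous fun y : ℝ => 4*a^3*b*(sin (2*y)^3*sin y)).intervalIntegrable 0 π
  have c3 : IntervalIntegrable (fun y : ℝ => 6*a^2*b^2*(sin (2*y)^2*sin y^2))
      MeasureTheory.volume 0 π :=
    (by fun_prop :
      Continuous fun y : ℝ => 6*a^2*b^2*(sin (2*y)^2*sin y^2)).intervalIntegrable 0 π
  have c4 : IntervalIntegrable (fun y : ℝ => 4*a*b^3*(sin (2*y)*sin y^3))
      MeasureTheory.volume 0 π :=
    (by fun_prop : Continuous fun y : ℝ => 4*a*b^3*(sin (2*y)*sin y^3)).intervalIntegrable 0 π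
  have c5 : IntervalIntegrable (fun y : ℝ => b^4 * sin y^4) MeasureTheory.volume 0 π :=
    (by fun_prop : Continuous fun y : ℝ => b^4 * sin y^4).intervalIntegrable 0 π
  rw [intervalIntegral.integral_add (((c1.add c2).add c3).add c4) c5,
    intervalIntegral.integral_add ((c1.add c2).add c3) c4,
    intervalIntegral.integral_add (c1.add c2) c3,
    intervalIntegral.integral_add c1 c2,
    intervalIntegral.integral_const_mul, intervalIntegral.integral_const_mul,
    intervalIntegral.integral_const_mul, intervalIntegral.integral_const_mul,
    intervalIntegral.integral_const_mul, I1, I2, I3, I4, I5]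
  ring

end SquareL4Aux

open SquareL4Aux

theorem square_eigenfunction_L4_norm
    (α : ℝ) :
    (∫ x in (0:ℝ)..π, ∫ y in (0:ℝ)..π,
        (cos α * sin x * sin (2*y) + sin α * sin (2*x) * sin y)^4)
      = (3 * π^2 / 256) * (13 - cos (4*α)) := by
  have hx : Set.EqOn
      (fun x : ℝ => ∫ y in (0:ℝ)..π,
        (cos α * sin x * sin (2*y) + sin α * sin (2*x) * sin y)^4)
      (fun x : ℝ => (3*π/8*cos α^4) * sin x^4
        + (3*π/2*(cos α^2*sin α^2)) * (sin (2*x)^2*sin x^2)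
        + (3*π/8*sin α^4) * sin (2*x)^4) (Set.uIcc 0 π) := by
    intro x _
    have h := inner_int (cos α * sin x) (sin α * sin (2*x))
    simp only []
    rw [show (fun y : ℝ => (cos α * sin x * sin (2*y) + sin α * sin (2*x) * sin y)^4)
      = fun y : ℝ => ((cos α * sin x) * sin (2*y) + (sin α * sin (2*x)) * sin y)^4 by
        funext y; ring]
    rw [h]; ring
  rw [intervalIntegral.integral_congr hx]
  have d1 : IntervalIntegrable (fun x : ℝ => (3*π/8*cos α^4) * sin x^4)
      MeasureTheory.volume 0 π :=
    (by fun_prop : Continuous fun x : ℝ => (3*π/8*cos α^4) * sin x^4).intervalIntegrable 0 π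
  have d2 : IntervalIntegrable
      (fun x : ℝ => (3*π/2*(cos α^2*sin α^2)) * (sin (2*x)^2*sin x^2))
      MeasureTheory.volume 0 π :=
    (by fun_prop : Continuous
      fun x : ℝ => (3*π/2*(cos α^2*sin α^2)) * (sin (2*x)^2*sin x^2)).intervalIntegrable 0 π
  have d3 : IntervalIntegrable (fun x : ℝ => (3*π/8*sin α^4) * sin (2*x)^4)
      MeasureTheory.volume 0 π :=
    (by fun_prop :
      Continuous fun x : ℝ => (3*π/8*sin α^4) * sin (2*x)^4).intervalIntegrable 0 π
  rw [intervalIntegral.integral_add (d1.add d2) d3, intervalIntegral.integral_add d1 d2,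
    intervalIntegral.integral_const_mul, intervalIntegral.integral_const_mul,
    intervalIntegral.integral_const_mul, I5, I3, I1]
  rw [show (4:ℝ)*α = 2*(2*α) by ring, cos_two_mul' (2*α), sin_two_mul, cos_two_mul' α]
  linear_combination (39*π^2/256 * (sin α^2 + cos α^2 + 1)) * sin_sq_add_cos_sq α
end

section
/- With Ω = (0,π)², φ_α as above and σ(α) := (∫_Ω φ_α⁴)/(∫_Ω φ_α²), one has σ(α) = (3/64)·(13 - cos(4α)); in particular σ(0) = σ(π/2) = 9/16 and σ(π/4) = σ(3π/4) = 21/32, and σ attains its minimum over α ∈ ℝ exactly at α ∈ (π/4)·(2ℤ) ... i.e. at the multiples of π/2. -/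
open Real

private lemma master (A0 A1 A2 B0 B1 B2 B3 B4 : ℝ) :
    (∫ y in (0:ℝ)..π,
      (A0 * sin y ^ 2 + A1 * (sin y ^ 2 * cos y) + A2 * (sin y ^ 2 * cos y ^ 2)
        + B0 * sin y ^ 4 + B1 * (sin y ^ 4 * cos y) + B2 * (sin y ^ 4 * cos y ^ 2)
        + B3 * (sin y ^ 4 * cos y ^ 3) + B4 * (sin y ^ 4 * cos y ^ 4)))
    = π * (A0 / 2 + A2 / 8 + 3 * B0 / 8 + B2 / 16 + 3 * B4 / 128) := by
  set c1 : ℝ := A0/2 + A2/8 + 3*B0/8 + B2/16 + 3*B4/128 with hc1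
  set c4 : ℝ := A2/4 - B0/4 - B2/24 - B4/64 with hc4
  set c6 : ℝ := B2/6 + 3*B4/16 with hc6
  have key := intervalIntegral.integral_eq_sub_of_hasDerivAt (a := (0:ℝ)) (b := π)
    (f := fun y => c1*y + (-c1)*(sin y*cos y) + (A1/3)*sin y^3 + c4*(sin y^3*cos y)
      + (B1/5 + B3/5)*sin y^5 + c6*(sin y^5*cos y) + (-B3/7)*sin y^7 + (-B4/8)*(sin y^7*cos y))
    (f' := fun y =>
      (A0 * sin y ^ 2 + A1 * (sin y ^ 2 * cos y) + A2 * (sin y ^ 2 * cos y ^ 2)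
        + B0 * sin y ^ 4 + B1 * (sin y ^ 4 * cos y) + B2 * (sin y ^ 4 * cos y ^ 2)
        + B3 * (sin y ^ 4 * cos y ^ 3) + B4 * (sin y ^ 4 * cos y ^ 4)))
    (fun y _ => by
      have hs := Real.hasDerivAt_sin y
      have hc := Real.hasDerivAt_cos y
      have h3 : HasDerivAt (fun t : ℝ => sin t ^ 3) (3 * sin y ^ 2 * cos y) y := by
        simpa using hs.fun_pow 3
      have h5 : HasDerivAt (fun t : ℝ => sin t ^ 5) (5 * sin y ^ 4 * cos y) y := by
        simpa using hs.fun_pow 5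
      have h7 : HasDerivAt (fun t : ℝ => sin t ^ 7) (7 * sin y ^ 6 * cos y) y := by
        simpa using hs.fun_pow 7
      have total := ((((((((hasDerivAt_id y).const_mul c1).add
        ((hs.mul hc).const_mul (-c1))).add
        (h3.const_mul (A1/3))).add
        ((h3.mul hc).const_mul c4)).add
        (h5.const_mul (B1/5 + B3/5))).add
        ((h5.mul hc).const_mul c6)).add
        (h7.const_mul (-B3/7))).add
        ((h7.mul hc).const_mul (-B4/8))
      convert total using 1
      · rfl
      · have hpy := sin_sq_add_cos_sq y
        linear_combination (-((-c1) + 3*c4*sin y^2 + 5*c6*sin y^4 + 7*(-B4/8)*sin y^6)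
          + A2*sin y^2 + B2*sin y^4 + B3*(sin y^4*cos y)
          + B4*(sin y^4*cos y^2 + sin y^4 - sin y^6)) * hpy)
    (by
      apply Continuous.intervalIntegrable
      continuity)
  rw [key]
  simp [Real.sin_pi]
  ring

private lemma inner4 (a b : ℝ) :
    (∫ y in (0:ℝ)..π, (a * sin (2*y) + b * sin y)^4)
      = π * (3/8*(a)^4 + 3/2*(a)^2*(b)^2 + 3/8*(b)^4) := by
  have hcong : (∫ y in (0:ℝ)..π, (a * sin (2*y) + b * sin y)^4)
      = ∫ y in (0:ℝ)..π,
        ((0:ℝ) * sin y ^ 2 + 0 * (sin y ^ 2 * cos y) + 0 * (sin y ^ 2 * cos y ^ 2)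
          + b^4 * sin y ^ 4 + (8*a*b^3) * (sin y ^ 4 * cos y) + (24*a^2*b^2) * (sin y ^ 4 * cos y ^ 2)
          + (32*a^3*b) * (sin y ^ 4 * cos y ^ 3) + (16*a^4) * (sin y ^ 4 * cos y ^ 4)) :=
    intervalIntegral.integral_congr (fun y _ => by rw [Real.sin_two_mul]; ring)
  rw [hcong, master]; ring

private lemma inner2 (a b : ℝ) :
    (∫ y in (0:ℝ)..π, (a * sin (2*y) + b * sin y)^2)
      = π * ((a)^2/2 + (b)^2/2) := by
  have hcong : (∫ y in (0:ℝ)..π, (a * sin (2*y) + b * sin y)^2)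
      = ∫ y in (0:ℝ)..π,
        (b^2 * sin y ^ 2 + (4*a*b) * (sin y ^ 2 * cos y) + (4*a^2) * (sin y ^ 2 * cos y ^ 2)
          + (0:ℝ) * sin y ^ 4 + 0 * (sin y ^ 4 * cos y) + 0 * (sin y ^ 4 * cos y ^ 2)
          + 0 * (sin y ^ 4 * cos y ^ 3) + 0 * (sin y ^ 4 * cos y ^ 4)) :=
    intervalIntegral.integral_congr (fun y _ => by rw [Real.sin_two_mul]; ring)
  rw [hcong, master]; ring

private lemma outer4 (p q : ℝ) :
    (∫ x in (0:ℝ)..π, π * (3/8*(p * sin x)^4 + 3/2*(p * sin x)^2*(q * sin (2*x))^2 + 3/8*(q * sin (2*x))^4))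
      = π^2 * (9/64*p^4 + 3/8*p^2*q^2 + 9/64*q^4) := by
  have hcong : (∫ x in (0:ℝ)..π, π * (3/8*(p * sin x)^4 + 3/2*(p * sin x)^2*(q * sin (2*x))^2 + 3/8*(q * sin (2*x))^4))
      = ∫ x in (0:ℝ)..π,
        ((0:ℝ) * sin x ^ 2 + 0 * (sin x ^ 2 * cos x) + 0 * (sin x ^ 2 * cos x ^ 2)
          + (π*(3/8)*p^4) * sin x ^ 4 + 0 * (sin x ^ 4 * cos x) + (π*6*p^2*q^2) * (sin x ^ 4 * cos x ^ 2)
          + 0 * (sin x ^ 4 * cos x ^ 3) + (π*6*q^4) * (sin x ^ 4 * cos x ^ 4)) :=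
    intervalIntegral.integral_congr (fun x _ => by rw [Real.sin_two_mul]; ring)
  rw [hcong, master]; ring

private lemma outer2 (p q : ℝ) :
    (∫ x in (0:ℝ)..π, π * ((p * sin x)^2/2 + (q * sin (2*x))^2/2))
      = π^2 * (p^2/4 + q^2/4) := by
  have hcong : (∫ x in (0:ℝ)..π, π * ((p * sin x)^2/2 + (q * sin (2*x))^2/2))
      = ∫ x in (0:ℝ)..π,
        ((π*p^2/2) * sin x ^ 2 + 0 * (sin x ^ 2 * cos x) + (π*2*q^2) * (sin x ^ 2 * cos x ^ 2)
          + (0:ℝ) * sin x ^ 4 + 0 * (sin x ^ 4 * cos x) + 0 * (sin x ^ 4 * cos x ^ 2)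
          + 0 * (sin x ^ 4 * cos x ^ 3) + 0 * (sin x ^ 4 * cos x ^ 4)) :=
    intervalIntegral.integral_congr (fun x _ => by rw [Real.sin_two_mul]; ring)
  rw [hcong, master]; ring

noncomputable def sigmaRatio (α : ℝ) : ℝ :=
  (∫ x in (0:ℝ)..π, ∫ y in (0:ℝ)..π,
      (cos α * sin x * sin (2*y) + sin α * sin (2*x) * sin y)^4)
  / (∫ x in (0:ℝ)..π, ∫ y in (0:ℝ)..π,
      (cos α * sin x * sin (2*y) + sin α * sin (2*x) * sin y)^2)

private lemma sigma_formula (α : ℝ) : sigmaRatio α = (3/64) * (13 - cos (4*α)) := by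
  have hπ : (π:ℝ) ≠ 0 := Real.pi_ne_zero
  unfold sigmaRatio
  simp only [inner4, inner2, outer4, outer2]
  have hpy := sin_sq_add_cos_sq α
  have hc4 : cos (4*α) = 1 - 8 * sin α ^ 2 * cos α ^ 2 := by
    have : (4:ℝ)*α = 2*(2*α) := by ring
    rw [this, Real.cos_two_mul, Real.cos_two_mul]
    nlinarith [hpy]
  rw [hc4]
  have hden : π^2 * (cos α^2/4 + sin α^2/4) = π^2/4 := by
    linear_combination (π^2/4) * hpy
  rw [hden, div_eq_iff (by positivity)]
  linear_combination (π^2*(9/64)*(sin α^2 + cos α^2 + 1)) * hpy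

theorem sigma_ratio_values :
    (∀ α : ℝ, sigmaRatio α = (3/64) * (13 - cos (4*α)))
    ∧ sigmaRatio 0 = 9/16 ∧ sigmaRatio (π/2) = 9/16
    ∧ sigmaRatio (π/4) = 21/32 ∧ sigmaRatio (3*π/4) = 21/32
    ∧ (∀ α : ℝ, ((∀ β : ℝ, sigmaRatio α ≤ sigmaRatio β)
        ↔ ∃ k : ℤ, α = k * (π/2))) := by
  refine ⟨sigma_formula, ?_, ?_, ?_, ?_, ?_⟩
  · rw [sigma_formula]; norm_num
  · rw [sigma_formula]
    have : (4:ℝ)*(π/2) = 2*π := by ring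
    rw [this, Real.cos_two_pi]; norm_num
  · rw [sigma_formula]
    have : (4:ℝ)*(π/4) = π := by ring
    rw [this, Real.cos_pi]; norm_num
  · rw [sigma_formula]
    have : (4:ℝ)*(3*π/4) = π + 2*π := by ring
    rw [this, Real.cos_add_two_pi, Real.cos_pi]; norm_num
  · intro α
    constructor
    · intro h
      have h0 := h 0
      rw [sigma_formula, sigma_formula] at h0
      norm_num at h0
      have hle : (1:ℝ) ≤ cos (4*α) := by nlinarith
      have heq : cos (4*α) = 1 := le_antisymm (Real.cos_le_one _) hle
      rw [Real.cos_eq_one_iff] at heq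
      obtain ⟨n, hn⟩ := heq
      exact ⟨n, by linarith⟩
    · intro ⟨k, hk⟩ β
      rw [sigma_formula, sigma_formula]
      have h1 : cos (4*α) = 1 := by
        rw [hk, show (4:ℝ)*((k:ℝ)*(π/2)) = (k:ℝ)*(2*π) by ring]
        exact Real.cos_int_mul_two_pi k
      have := Real.cos_le_one (4*β)
      rw [h1]
      nlinarith [Real.neg_one_le_cos (4*β)]
end
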